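/- arXiv:2302.13914 — 3 statements merged into one kernel-verified Lean document; each statement's English description precedes it below -/
import Mathlib

section
/- Let X, (X_{it}) be iid with E[X⁴] < ∞ and set T₁₂ = Σ_{t=1}^n X_{1t}X_{2t}. Then E[T₁₂⁴] = n(n−1)(n−2)(n−3)(E[X])⁸ + 6n(n−1)(n−2)(E[X²])²(E[X])⁴ + 3n(n−1)(E[X²])⁴ + 4n(n−1)(E[X³])²(E[X])² + n(E[X⁴])². -/
open MeasureTheory ProbabilityTheory

private lemma abs_pow_le_one_add (x : ℝ) {k : ℕ} (hk : k ≤ 4) : |x| ^ k ≤ 1 + x ^ 4 := by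
  have h4 : x ^ 4 = |x| ^ 4 := by
    rw [← abs_pow, abs_of_nonneg (by positivity)]
  rcases le_total |x| 1 with h | h
  · have h1 : |x| ^ k ≤ 1 := pow_le_one₀ (abs_nonneg x) h
    nlinarith [pow_nonneg (abs_nonneg x) 4]
  · have h1 : |x| ^ k ≤ |x| ^ 4 := pow_le_pow_right₀ h hk
    nlinarith

private lemma sum_moments {Ω : Type*} [MeasurableSpace Ω] {μ : Measure Ω}
    [IsProbabilityMeasure μ] {ι : Type*} (Y : ι → Ω → ℝ) (m1 m2 m3 m4 : ℝ)
    (hi : ∀ i, ∀ k, k ≤ 4 → Integrable (fun ω => Y i ω ^ k) μ)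
    (hv1 : ∀ i, ∫ ω, Y i ω ∂μ = m1)
    (hv2 : ∀ i, ∫ ω, Y i ω ^ 2 ∂μ = m2)
    (hv3 : ∀ i, ∫ ω, Y i ω ^ 3 ∂μ = m3)
    (hv4 : ∀ i, ∫ ω, Y i ω ^ 4 ∂μ = m4)
    (hindep : ∀ (a : ι) (s : Finset ι), a ∉ s →
      IndepFun (Y a) (fun ω => ∑ t ∈ s, Y t ω) μ)
    (s : Finset ι) :
    (∀ k, k ≤ 4 → Integrable (fun ω => (∑ t ∈ s, Y t ω) ^ k) μ) ∧
    (∫ ω, (∑ t ∈ s, Y t ω) ∂μ = (s.card : ℝ) * m1) ∧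
    (∫ ω, (∑ t ∈ s, Y t ω) ^ 2 ∂μ = (s.card : ℝ) * m2
        + (s.card : ℝ) * ((s.card : ℝ) - 1) * m1 ^ 2) ∧
    (∫ ω, (∑ t ∈ s, Y t ω) ^ 3 ∂μ = (s.card : ℝ) * m3
        + 3 * (s.card : ℝ) * ((s.card : ℝ) - 1) * m2 * m1
        + (s.card : ℝ) * ((s.card : ℝ) - 1) * ((s.card : ℝ) - 2) * m1 ^ 3) ∧
    (∫ ω, (∑ t ∈ s, Y t ω) ^ 4 ∂μ = (s.card : ℝ) * m4
        + 4 * (s.card : ℝ) * ((s.card : ℝ) - 1) * m3 * m1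
        + 3 * (s.card : ℝ) * ((s.card : ℝ) - 1) * m2 ^ 2
        + 6 * (s.card : ℝ) * ((s.card : ℝ) - 1) * ((s.card : ℝ) - 2) * m2 * m1 ^ 2
        + (s.card : ℝ) * ((s.card : ℝ) - 1) * ((s.card : ℝ) - 2) * ((s.card : ℝ) - 3)
            * m1 ^ 4) := by
  classical
  induction s using Finset.cons_induction with
  | empty =>
      refine ⟨fun k hk => ?_, by simp, by simp, by simp, by simp⟩
      simpa using (integrable_const ((0 : ℝ) ^ k))
  | cons a s ha IH =>
      obtain ⟨iT, t1, t2, t3, t4⟩ := IH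
      have hAT : IndepFun (Y a) (fun ω => ∑ t ∈ s, Y t ω) μ := hindep a s ha
      have Ind : ∀ j k : ℕ,
          IndepFun (fun ω => Y a ω ^ j) (fun ω => (∑ t ∈ s, Y t ω) ^ k) μ :=
        fun j k => hAT.comp (measurable_id.pow_const j) (measurable_id.pow_const k)
      have iprod : ∀ j k : ℕ, j ≤ 4 → k ≤ 4 →
          Integrable (fun ω => Y a ω ^ j * (∑ t ∈ s, Y t ω) ^ k) μ :=
        fun j k hj hk => (Ind j k).integrable_mul (hi a j hj) (iT k hk)
      have vprod : ∀ j k : ℕ, j ≤ 4 → k ≤ 4 →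
          ∫ ω, Y a ω ^ j * (∑ t ∈ s, Y t ω) ^ k ∂μ
            = (∫ ω, Y a ω ^ j ∂μ) * ∫ ω, (∑ t ∈ s, Y t ω) ^ k ∂μ :=
        fun j k hj hk => (Ind j k).integral_fun_mul_eq_mul_integral (hi a j hj).aestronglyMeasurable (iT k hk).aestronglyMeasurable
      have iS : ∀ K : ℕ, K ≤ 4 →
          Integrable (fun ω => (Y a ω + ∑ t ∈ s, Y t ω) ^ K) μ := by
        intro K hK
        have e : (fun ω => (Y a ω + ∑ t ∈ s, Y t ω) ^ K)
            = fun ω => ∑ j ∈ Finset.range (K + 1),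
                Y a ω ^ j * (∑ t ∈ s, Y t ω) ^ (K - j) * (K.choose j : ℝ) := by
          funext ω; rw [add_pow]
        rw [e]
        exact integrable_finset_sum _ fun j hj =>
          (iprod j (K - j) (le_trans (Nat.le_of_lt_succ (Finset.mem_range.mp hj)) hK)
            (le_trans (Nat.sub_le _ _) hK)).mul_const _
      have vS : ∀ K : ℕ, K ≤ 4 →
          ∫ ω, (Y a ω + ∑ t ∈ s, Y t ω) ^ K ∂μ
            = ∑ j ∈ Finset.range (K + 1),
                (∫ ω, Y a ω ^ j ∂μ) * (∫ ω, (∑ t ∈ s, Y t ω) ^ (K - j) ∂μ)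
                  * (K.choose j : ℝ) := by
        intro K hK
        have e : (fun ω => (Y a ω + ∑ t ∈ s, Y t ω) ^ K)
            = fun ω => ∑ j ∈ Finset.range (K + 1),
                Y a ω ^ j * (∑ t ∈ s, Y t ω) ^ (K - j) * (K.choose j : ℝ) := by
          funext ω; rw [add_pow]
        rw [e, integral_finset_sum _ fun j hj =>
          (iprod j (K - j) (le_trans (Nat.le_of_lt_succ (Finset.mem_range.mp hj)) hK)
            (le_trans (Nat.sub_le _ _) hK)).mul_const _]
        refine Finset.sum_congr rfl fun j hj => ?_
        rw [integral_mul_const,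
          vprod j (K - j) (le_trans (Nat.le_of_lt_succ (Finset.mem_range.mp hj)) hK)
            (le_trans (Nat.sub_le _ _) hK)]
      simp only [Finset.sum_cons, Finset.card_cons]
      refine ⟨iS, ?_, ?_, ?_, ?_⟩
      · rw [show (fun ω => Y a ω + ∑ t ∈ s, Y t ω)
            = fun ω => (Y a ω + ∑ t ∈ s, Y t ω) ^ 1 by simp]
        rw [vS 1 (by norm_num)]
        simp only [Finset.sum_range_succ, Finset.sum_range_zero, pow_zero, pow_one,
          Nat.sub_self, Nat.sub_zero, integral_const, measure_univ, ENNReal.toReal_one,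
          smul_eq_mul, one_mul, mul_one]
        rw [hv1 a, t1]
        norm_num [Nat.choose]
        push_cast
        ring
      · rw [vS 2 (by norm_num)]
        simp only [Finset.sum_range_succ, Finset.sum_range_zero, integral_const,
          measure_univ, ENNReal.toReal_one, smul_eq_mul]
        norm_num [hv1 a, hv2 a, t1, t2, Nat.choose]
        push_cast
        ring
      · rw [vS 3 (by norm_num)]
        simp only [Finset.sum_range_succ, Finset.sum_range_zero, integral_const,
          measure_univ, ENNReal.toReal_one, smul_eq_mul]
        norm_num [hv1 a, hv2 a, hv3 a, t1, t2, t3, Nat.choose]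
        push_cast
        ring
      · rw [vS 4 (by norm_num)]
        simp only [Finset.sum_range_succ, Finset.sum_range_zero, integral_const,
          measure_univ, ENNReal.toReal_one, smul_eq_mul]
        norm_num [hv1 a, hv2 a, hv3 a, hv4 a, t1, t2, t3, t4, Nat.choose]
        push_cast
        ring

theorem stmt_10 {Ω : Type*} [MeasurableSpace Ω] (μ : Measure Ω) [IsProbabilityMeasure μ]
    (n : ℕ) (X : Fin 2 × Fin n → Ω → ℝ) (X₀ : Ω → ℝ)
    (hmeas : ∀ i, Measurable (X i)) (hmeas₀ : Measurable X₀)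
    (hindep : iIndepFun X μ)
    (hid : ∀ i, IdentDistrib (X i) X₀ μ μ)
    (hInt4 : Integrable (fun ω => X₀ ω ^ 4) μ) :
    ∫ ω, (∑ t : Fin n, X (0, t) ω * X (1, t) ω) ^ 4 ∂μ =
      (n : ℝ) * ((n : ℝ) - 1) * ((n : ℝ) - 2) * ((n : ℝ) - 3) * (∫ ω, X₀ ω ∂μ) ^ 8
        + 6 * (n : ℝ) * ((n : ℝ) - 1) * ((n : ℝ) - 2) * (∫ ω, X₀ ω ^ 2 ∂μ) ^ 2 * (∫ ω, X₀ ω ∂μ) ^ 4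
        + 3 * (n : ℝ) * ((n : ℝ) - 1) * (∫ ω, X₀ ω ^ 2 ∂μ) ^ 4
        + 4 * (n : ℝ) * ((n : ℝ) - 1) * (∫ ω, X₀ ω ^ 3 ∂μ) ^ 2 * (∫ ω, X₀ ω ∂μ) ^ 2
        + (n : ℝ) * (∫ ω, X₀ ω ^ 4 ∂μ) ^ 2 := by
  classical
  -- integrability of powers of X₀
  have hX0k : ∀ k, k ≤ 4 → Integrable (fun ω => X₀ ω ^ k) μ := by
    intro k hk
    refine ((integrable_const (1 : ℝ)).add hInt4).mono
      ((hmeas₀.pow_const k).aestronglyMeasurable) (Filter.Eventually.of_forall fun ω => ?_)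
    have h := abs_pow_le_one_add (X₀ ω) hk
    simp only [Pi.add_apply, Real.norm_eq_abs]
    rw [abs_pow, abs_of_nonneg (by positivity : (0:ℝ) ≤ 1 + X₀ ω ^ 4)]
    exact h
  have hXik : ∀ i, ∀ k, k ≤ 4 → Integrable (fun ω => X i ω ^ k) μ := fun i k hk =>
    ((hid i).comp (measurable_id.pow_const k)).integrable_iff.mpr (hX0k k hk)
  have hXval : ∀ i k, ∫ ω, X i ω ^ k ∂μ = ∫ ω, X₀ ω ^ k ∂μ := fun i k =>
    ((hid i).comp (measurable_id.pow_const k)).integral_eq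
  have hne : ∀ t : Fin n, ((0 : Fin 2), t) ≠ ((1 : Fin 2), t) := by
    intro t h
    have h0 : (0 : Fin 2) = 1 := congrArg Prod.fst h
    exact absurd h0 (by decide)
  have hYindpow : ∀ (t : Fin n) (j k : ℕ),
      IndepFun (fun ω => X (0, t) ω ^ j) (fun ω => X (1, t) ω ^ k) μ := fun t j k =>
    (hindep.indepFun (hne t)).comp (measurable_id.pow_const j) (measurable_id.pow_const k)
  have hYint : ∀ (t : Fin n) (k : ℕ), k ≤ 4 →
      Integrable (fun ω => (X (0, t) ω * X (1, t) ω) ^ k) μ := by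
    intro t k hk
    have e : (fun ω => (X (0, t) ω * X (1, t) ω) ^ k)
        = fun ω => X (0, t) ω ^ k * X (1, t) ω ^ k := by
      funext ω; rw [mul_pow]
    rw [e]
    exact (hYindpow t k k).integrable_mul (hXik _ k hk) (hXik _ k hk)
  have hYval : ∀ (t : Fin n) (k : ℕ), k ≤ 4 →
      ∫ ω, (X (0, t) ω * X (1, t) ω) ^ k ∂μ = (∫ ω, X₀ ω ^ k ∂μ) ^ 2 := by
    intro t k hk
    have e : (fun ω => (X (0, t) ω * X (1, t) ω) ^ k)
        = fun ω => X (0, t) ω ^ k * X (1, t) ω ^ k := by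
      funext ω; rw [mul_pow]
    have hm : ∫ ω, X (0, t) ω ^ k * X (1, t) ω ^ k ∂μ
        = (∫ ω, X (0, t) ω ^ k ∂μ) * ∫ ω, X (1, t) ω ^ k ∂μ :=
      (hYindpow t k k).integral_fun_mul_eq_mul_integral (hXik _ k hk).aestronglyMeasurable (hXik _ k hk).aestronglyMeasurable
    rw [e, hm, hXval, hXval, sq]
  -- independence of one product from a sum of other products
  have hYsum : ∀ (a : Fin n) (s : Finset (Fin n)), a ∉ s →
      IndepFun (fun ω => X (0, a) ω * X (1, a) ω)
        (fun ω => ∑ t ∈ s, X (0, t) ω * X (1, t) ω) μ := by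
    intro a s ha
    set S : Finset (Fin 2 × Fin n) := {(0, a), (1, a)} with hS
    set T : Finset (Fin 2 × Fin n)
      := s.image (fun t => ((0 : Fin 2), t)) ∪ s.image (fun t => ((1 : Fin 2), t)) with hT
    have hdisj : Disjoint S T := by
      rw [Finset.disjoint_left]
      intro x hx hx'
      simp only [hS, hT, Finset.mem_insert, Finset.mem_singleton, Finset.mem_union,
        Finset.mem_image] at hx hx'
      obtain ⟨t, ht, hteq⟩ | ⟨t, ht, hteq⟩ := hx' <;> obtain rfl | rfl := hx <;>
        exact ha ((show t = a from congrArg Prod.snd hteq) ▸ ht)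
    have h0 : ∀ t ∈ s, ((0 : Fin 2), t) ∈ T := fun t ht =>
      Finset.mem_union_left _ (Finset.mem_image_of_mem _ ht)
    have h1 : ∀ t ∈ s, ((1 : Fin 2), t) ∈ T := fun t ht =>
      Finset.mem_union_right _ (Finset.mem_image_of_mem _ ht)
    have hmemS0 : ((0 : Fin 2), a) ∈ S := by simp [hS]
    have hmemS1 : ((1 : Fin 2), a) ∈ S := by simp [hS]
    let φ : (∀ _ : {x // x ∈ S}, ℝ) → ℝ := fun v => v ⟨(0, a), hmemS0⟩ * v ⟨(1, a), hmemS1⟩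
    let ψ : (∀ _ : {x // x ∈ T}, ℝ) → ℝ := fun v =>
      ∑ t ∈ s.attach, v ⟨((0 : Fin 2), t.1), h0 t.1 t.2⟩ * v ⟨((1 : Fin 2), t.1), h1 t.1 t.2⟩
    have hφ : Measurable φ := (measurable_pi_apply _).mul (measurable_pi_apply _)
    have hψ : Measurable ψ :=
      Finset.measurable_sum _ fun t _ => (measurable_pi_apply _).mul (measurable_pi_apply _)
    have key := (hindep.indepFun_finset S T hdisj hmeas).comp hφ hψ
    have e1 : (φ ∘ fun ω (i : {x // x ∈ S}) => X i ω)
        = fun ω => X (0, a) ω * X (1, a) ω := rfl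
    have e2 : (ψ ∘ fun ω (i : {x // x ∈ T}) => X i ω)
        = fun ω => ∑ t ∈ s, X (0, t) ω * X (1, t) ω := by
      funext ω
      exact Finset.sum_attach s fun t => X (0, t) ω * X (1, t) ω
    rw [e1, e2] at key
    exact key
  obtain ⟨-, -, -, -, h4⟩ := sum_moments (fun t ω => X (0, t) ω * X (1, t) ω)
    ((∫ ω, X₀ ω ∂μ) ^ 2) ((∫ ω, X₀ ω ^ 2 ∂μ) ^ 2) ((∫ ω, X₀ ω ^ 3 ∂μ) ^ 2)
    ((∫ ω, X₀ ω ^ 4 ∂μ) ^ 2)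
    (fun t k hk => hYint t k hk)
    (fun t => by simpa using hYval t 1 (by norm_num))
    (fun t => hYval t 2 (by norm_num))
    (fun t => hYval t 3 (by norm_num))
    (fun t => hYval t 4 (by norm_num))
    hYsum Finset.univ
  rw [h4, Finset.card_univ, Fintype.card_fin]
  ring
end

section
/- Let X, (X_{it})_{i∈{1,2,3}, 1≤t≤n} be iid random variables with mean zero, variance one, and E[X⁴] < ∞. Set T_{12} = Σ_t X_{1t}X_{2t} and T_{13} = Σ_t X_{1t}X_{3t}. Then Cov(T_{12}², T_{13}²) = n(E[X⁴] − 1). -/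
open MeasureTheory ProbabilityTheory

lemma aux_prod_int {Ω : Type*} [MeasurableSpace Ω] {μ : Measure Ω} [IsProbabilityMeasure μ]
    {ι : Type*} {Y : ι → Ω → ℝ}
    (hindep : iIndepFun Y μ)
    (hmeas : ∀ i, Measurable (Y i)) (c : ι → ℕ)
    (hint : ∀ i, Integrable (fun ω => Y i ω ^ c i) μ) (s : Finset ι) :
    Integrable (fun ω => ∏ i ∈ s, Y i ω ^ c i) μ ∧
      ∫ ω, ∏ i ∈ s, Y i ω ^ c i ∂μ = ∏ i ∈ s, ∫ ω, Y i ω ^ c i ∂μ := by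
  classical
  induction s using Finset.induction with
  | empty => simp
  | @insert a s ha ih =>
    have hZ : iIndepFun (fun i ω => Y i ω ^ c i) μ :=
      hindep.comp (fun i x => x ^ c i) (fun i => measurable_id.pow_const (c i))
    have hZmeas : ∀ i, Measurable (fun ω => Y i ω ^ c i) :=
      fun i => (hmeas i).pow_const (c i)
    have hI : IndepFun (fun ω => ∏ j ∈ s, Y j ω ^ c j) (fun ω => Y a ω ^ c a) μ := by
      have h := hZ.indepFun_finsetProd_of_notMem hZmeas ha
      have : (∏ j ∈ s, fun ω => Y j ω ^ c j) = fun ω => ∏ j ∈ s, Y j ω ^ c j := by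
        funext ω; exact Finset.prod_apply ω s fun j => fun ω => Y j ω ^ c j
      rwa [this] at h
    constructor
    · have := hI.symm.integrable_mul (hint a) ih.1
      simpa [Finset.prod_insert ha, Pi.mul_def] using this
    · have := hI.symm.integral_mul_eq_mul_integral (hint a).1 ih.1.1
      simp only [Finset.prod_insert ha, ← ih.2]
      exact this

theorem stmt_12 {Ω : Type*} [MeasurableSpace Ω] (μ : Measure Ω) [IsProbabilityMeasure μ]
    (n : ℕ) (X : Fin 3 × Fin n → Ω → ℝ) (X₀ : Ω → ℝ)
    (hmeas : ∀ i, Measurable (X i)) (hmeas₀ : Measurable X₀)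
    (hindep : iIndepFun X μ)
    (hid : ∀ i, IdentDistrib (X i) X₀ μ μ)
    (hmean : ∫ ω, X₀ ω ∂μ = 0) (hvar : ∫ ω, X₀ ω ^ 2 ∂μ = 1)
    (hInt4 : Integrable (fun ω => X₀ ω ^ 4) μ) :
    (∫ ω, (∑ t : Fin n, X (0, t) ω * X (1, t) ω) ^ 2
            * (∑ t : Fin n, X (0, t) ω * X (2, t) ω) ^ 2 ∂μ)
      - (∫ ω, (∑ t : Fin n, X (0, t) ω * X (1, t) ω) ^ 2 ∂μ)
          * (∫ ω, (∑ t : Fin n, X (0, t) ω * X (2, t) ω) ^ 2 ∂μ)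
      = (n : ℝ) * ((∫ ω, X₀ ω ^ 4 ∂μ) - 1) := by
  classical
  set M : ℕ → ℝ := fun k => ∫ ω, X₀ ω ^ k ∂μ with hMdef
  have hM0 : M 0 = 1 := by simp [hMdef]
  have hM1 : M 1 = 0 := by simpa [hMdef] using hmean
  have hM2 : M 2 = 1 := hvar
  -- integrability of powers of X₀
  have hX0int : ∀ k, k ≤ 4 → Integrable (fun ω => X₀ ω ^ k) μ := by
    intro k hk
    have hb : Integrable (fun ω => 1 + X₀ ω ^ 4) μ := (integrable_const 1).add hInt4
    refine hb.mono' ((hmeas₀.pow_const k).aestronglyMeasurable) ?_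
    filter_upwards with ω
    have h4 : X₀ ω ^ 4 = |X₀ ω| ^ 4 := by
      rw [← abs_pow, abs_of_nonneg (by positivity)]
    rw [Real.norm_eq_abs, abs_pow]
    rcases le_or_gt (|X₀ ω|) 1 with h | h
    · have : |X₀ ω| ^ k ≤ 1 := pow_le_one₀ (abs_nonneg _) h
      nlinarith [pow_nonneg (abs_nonneg (X₀ ω)) 4]
    · have : |X₀ ω| ^ k ≤ |X₀ ω| ^ 4 := pow_le_pow_right₀ h.le hk
      nlinarith
  have hidk : ∀ (i : Fin 3 × Fin n) (k : ℕ),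
      IdentDistrib (fun ω => X i ω ^ k) (fun ω => X₀ ω ^ k) μ μ := by
    intro i k
    exact (hid i).comp (measurable_id.pow_const k)
  have hXint : ∀ (i : Fin 3 × Fin n) (k : ℕ), k ≤ 4 →
      Integrable (fun ω => X i ω ^ k) μ :=
    fun i k hk => ((hidk i k).integrable_iff).mpr (hX0int k hk)
  have hXval : ∀ (i : Fin 3 × Fin n) (k : ℕ), ∫ ω, X i ω ^ k ∂μ = M k :=
    fun i k => (hidk i k).integral_eq
  have key : ∀ (c : Fin 3 × Fin n → ℕ), (∀ j, c j ≤ 4) →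
      Integrable (fun ω => ∏ j, X j ω ^ c j) μ ∧
      ∫ ω, ∏ j, X j ω ^ c j ∂μ = ∏ j, M (c j) := by
    intro c hc
    have h := aux_prod_int hindep hmeas c (fun j => hXint j (c j) (hc j)) Finset.univ
    exact ⟨h.1, by rw [h.2]; exact Finset.prod_congr rfl fun j _ => hXval j (c j)⟩
  -- indicator exponents
  set e : (Fin 3 × Fin n) → (Fin 3 × Fin n) → ℕ :=
    fun a j => if j = a then 1 else 0 with hedef
  have prod_e : ∀ (a : Fin 3 × Fin n) (ω : Ω), (∏ j, X j ω ^ e a j) = X a ω := by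
    intro a ω
    rw [Finset.prod_eq_single a]
    · simp [hedef]
    · intro j _ hj; simp [hedef, hj]
    · intro h; exact absurd (Finset.mem_univ a) h
  have he_pair : ∀ (a b j : Fin 3 × Fin n), a ≠ b → e a j + e b j ≤ 1 := by
    intro a b j hab
    simp only [hedef]
    split_ifs with h1 h2
    · exact absurd (h1.symm.trans h2) hab
    all_goals omega
  -- row products
  have rowSS : ∀ s t : Fin n,
      (∏ r : Fin n, M ((if r = s then 1 else 0) + (if r = t then 1 else 0)))
        = if s = t then 1 else 0 := by
    intro s t
    by_cases h : s = t
    · subst h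
      rw [if_pos rfl, Finset.prod_eq_one]
      intro r _
      by_cases hr : r = s
      · simp [hr, hM2]
      · simp [hr, hM0]
    · rw [if_neg h]
      refine Finset.prod_eq_zero (Finset.mem_univ s) ?_
      simp [h, hM1]
  have rowZ : (∏ _r : Fin n, M 0) = 1 := by simp [hM0]
  have row00 : ∀ s u : Fin n,
      (∏ r : Fin n, M ((if r = s then 1 else 0) + (if r = s then 1 else 0)
          + (if r = u then 1 else 0) + (if r = u then 1 else 0)))
        = if s = u then M 4 else 1 := by
    intro s u
    by_cases h : s = u
    · subst h
      rw [if_pos rfl, Finset.prod_eq_single s]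
      · simp
      · intro r _ hr; simp [hr, hM0]
      · intro hs; exact absurd (Finset.mem_univ s) hs
    · rw [if_neg h, Finset.prod_eq_one]
      intro r _
      by_cases hrs : r = s
      · subst hrs; simp [h, hM2]
      · by_cases hru : r = u
        · subst hru; simp [hrs, hM2]
        · simp [hrs, hru, hM0]
  -- pair terms
  have pair1 : ∀ s t : Fin n,
      Integrable (fun ω => (X (0,s) ω * X (1,s) ω) * (X (0,t) ω * X (1,t) ω)) μ ∧
      ∫ ω, (X (0,s) ω * X (1,s) ω) * (X (0,t) ω * X (1,t) ω) ∂μ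
        = if s = t then 1 else 0 := by
    intro s t
    have hc : ∀ j, e (0,s) j + e (1,s) j + e (0,t) j + e (1,t) j ≤ 4 := by
      intro j; simp only [hedef]; split_ifs <;> omega
    have expand : (fun ω => (X (0,s) ω * X (1,s) ω) * (X (0,t) ω * X (1,t) ω))
        = fun ω => ∏ j, X j ω ^ (e (0,s) j + e (1,s) j + e (0,t) j + e (1,t) j) := by
      funext ω
      simp only [pow_add, Finset.prod_mul_distrib, prod_e]
      all_goals ring
    obtain ⟨h1, h2⟩ := key _ hc
    rw [expand]
    refine ⟨h1, ?_⟩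
    rw [h2, Fintype.prod_prod_type, Fin.prod_univ_three]
    have g0 : (∏ r : Fin n, M (e (0,s) (0,r) + e (1,s) (0,r) + e (0,t) (0,r) + e (1,t) (0,r)))
        = if s = t then 1 else 0 := by
      rw [← rowSS s t]
      refine Finset.prod_congr rfl fun r _ => ?_
      congr 1 <;> simp [hedef, Prod.ext_iff]
    have g1 : (∏ r : Fin n, M (e (0,s) (1,r) + e (1,s) (1,r) + e (0,t) (1,r) + e (1,t) (1,r)))
        = if s = t then 1 else 0 := by
      rw [← rowSS s t]
      refine Finset.prod_congr rfl fun r _ => ?_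
      congr 1 <;> simp [hedef, Prod.ext_iff]
    have g2 : (∏ r : Fin n, M (e (0,s) (2,r) + e (1,s) (2,r) + e (0,t) (2,r) + e (1,t) (2,r))) = 1 := by
      rw [← rowZ]
      refine Finset.prod_congr rfl fun r _ => ?_
      congr 1 <;> simp [hedef, Prod.ext_iff]
    rw [g0, g1, g2]
    by_cases h : s = t <;> simp [h]
  have pair2 : ∀ s t : Fin n,
      Integrable (fun ω => (X (0,s) ω * X (2,s) ω) * (X (0,t) ω * X (2,t) ω)) μ ∧
      ∫ ω, (X (0,s) ω * X (2,s) ω) * (X (0,t) ω * X (2,t) ω) ∂μ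
        = if s = t then 1 else 0 := by
    intro s t
    have hc : ∀ j, e (0,s) j + e (2,s) j + e (0,t) j + e (2,t) j ≤ 4 := by
      intro j; simp only [hedef]; split_ifs <;> omega
    have expand : (fun ω => (X (0,s) ω * X (2,s) ω) * (X (0,t) ω * X (2,t) ω))
        = fun ω => ∏ j, X j ω ^ (e (0,s) j + e (2,s) j + e (0,t) j + e (2,t) j) := by
      funext ω
      simp only [pow_add, Finset.prod_mul_distrib, prod_e]
      all_goals ring
    obtain ⟨h1, h2⟩ := key _ hc
    rw [expand]
    refine ⟨h1, ?_⟩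
    rw [h2, Fintype.prod_prod_type, Fin.prod_univ_three]
    have g0 : (∏ r : Fin n, M (e (0,s) (0,r) + e (2,s) (0,r) + e (0,t) (0,r) + e (2,t) (0,r)))
        = if s = t then 1 else 0 := by
      rw [← rowSS s t]
      refine Finset.prod_congr rfl fun r _ => ?_
      congr 1 <;> simp [hedef, Prod.ext_iff]
    have g1 : (∏ r : Fin n, M (e (0,s) (1,r) + e (2,s) (1,r) + e (0,t) (1,r) + e (2,t) (1,r))) = 1 := by
      rw [← rowZ]
      refine Finset.prod_congr rfl fun r _ => ?_
      congr 1 <;> simp [hedef, Prod.ext_iff]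
    have g2 : (∏ r : Fin n, M (e (0,s) (2,r) + e (2,s) (2,r) + e (0,t) (2,r) + e (2,t) (2,r)))
        = if s = t then 1 else 0 := by
      rw [← rowSS s t]
      refine Finset.prod_congr rfl fun r _ => ?_
      congr 1 <;> simp [hedef, Prod.ext_iff]
    rw [g0, g1, g2]
    by_cases h : s = t <;> simp [h]
  -- quadruple terms
  have quad : ∀ s t u v : Fin n,
      Integrable (fun ω => (X (0,s) ω * X (1,s) ω) * (X (0,t) ω * X (1,t) ω)
          * ((X (0,u) ω * X (2,u) ω) * (X (0,v) ω * X (2,v) ω))) μ ∧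
      ∫ ω, (X (0,s) ω * X (1,s) ω) * (X (0,t) ω * X (1,t) ω)
          * ((X (0,u) ω * X (2,u) ω) * (X (0,v) ω * X (2,v) ω)) ∂μ
        = if s = t ∧ u = v then (if s = u then M 4 else 1) else 0 := by
    intro s t u v
    set c : Fin 3 × Fin n → ℕ := fun j =>
      e (0,s) j + e (1,s) j + e (0,t) j + e (1,t) j
        + e (0,u) j + e (2,u) j + e (0,v) j + e (2,v) j with hcdef
    have hc : ∀ j, c j ≤ 4 := by
      intro j
      have p1 := he_pair (0,s) (1,s) j (by intro h; injection h with h1 _; exact absurd h1 (by decide))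
      have p2 := he_pair (0,t) (1,t) j (by intro h; injection h with h1 _; exact absurd h1 (by decide))
      have p3 := he_pair (0,u) (2,u) j (by intro h; injection h with h1 _; exact absurd h1 (by decide))
      have p4 := he_pair (0,v) (2,v) j (by intro h; injection h with h1 _; exact absurd h1 (by decide))
      simp only [hcdef]
      omega
    have expand : (fun ω => (X (0,s) ω * X (1,s) ω) * (X (0,t) ω * X (1,t) ω)
          * ((X (0,u) ω * X (2,u) ω) * (X (0,v) ω * X (2,v) ω)))
        = fun ω => ∏ j, X j ω ^ c j := by
      funext ω
      simp only [hcdef, pow_add, Finset.prod_mul_distrib, prod_e]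
      all_goals ring
    obtain ⟨h1, h2⟩ := key _ hc
    rw [expand]
    refine ⟨h1, ?_⟩
    rw [h2, Fintype.prod_prod_type, Fin.prod_univ_three]
    have g1 : (∏ r : Fin n, M (c (1, r))) = if s = t then 1 else 0 := by
      rw [← rowSS s t]
      refine Finset.prod_congr rfl fun r _ => ?_
      congr 1 <;> simp [hcdef, hedef, Prod.ext_iff]
    have g2 : (∏ r : Fin n, M (c (2, r))) = if u = v then 1 else 0 := by
      rw [← rowSS u v]
      refine Finset.prod_congr rfl fun r _ => ?_
      congr 1 <;> simp [hcdef, hedef, Prod.ext_iff]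
    by_cases hst : s = t
    · by_cases huv : u = v
      · have g0 : (∏ r : Fin n, M (c (0, r))) = if s = u then M 4 else 1 := by
          rw [← row00 s u]
          refine Finset.prod_congr rfl fun r _ => ?_
          congr 1 <;> (simp [hcdef, hedef, Prod.ext_iff, ← hst, ← huv]; try omega)
        rw [g0, g1, g2]
        simp [hst, huv]
      · rw [g1, g2]
        simp [huv]
    · rw [g1]
      simp [hst]
  -- second moments of T12 and T13
  have E12 : ∫ ω, (∑ t : Fin n, X (0, t) ω * X (1, t) ω) ^ 2 ∂μ = (n : ℝ) := by
    have hsq : (fun ω => (∑ t : Fin n, X (0, t) ω * X (1, t) ω) ^ 2)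
        = fun ω => ∑ s : Fin n, ∑ t : Fin n,
            (X (0, s) ω * X (1, s) ω) * (X (0, t) ω * X (1, t) ω) := by
      funext ω
      rw [sq, Finset.sum_mul_sum]
    rw [hsq, integral_finset_sum _
      (fun s _ => integrable_finset_sum _ fun t _ => (pair1 s t).1)]
    rw [Finset.sum_congr rfl fun s _ =>
      integral_finset_sum _ fun t _ => (pair1 s t).1]
    rw [Finset.sum_congr rfl fun s _ => Finset.sum_congr rfl fun t _ => (pair1 s t).2]
    simp [Finset.sum_ite_eq]
  have E13 : ∫ ω, (∑ t : Fin n, X (0, t) ω * X (2, t) ω) ^ 2 ∂μ = (n : ℝ) := by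
    have hsq : (fun ω => (∑ t : Fin n, X (0, t) ω * X (2, t) ω) ^ 2)
        = fun ω => ∑ s : Fin n, ∑ t : Fin n,
            (X (0, s) ω * X (2, s) ω) * (X (0, t) ω * X (2, t) ω) := by
      funext ω
      rw [sq, Finset.sum_mul_sum]
    rw [hsq, integral_finset_sum _
      (fun s _ => integrable_finset_sum _ fun t _ => (pair2 s t).1)]
    rw [Finset.sum_congr rfl fun s _ =>
      integral_finset_sum _ fun t _ => (pair2 s t).1]
    rw [Finset.sum_congr rfl fun s _ => Finset.sum_congr rfl fun t _ => (pair2 s t).2]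
    simp [Finset.sum_ite_eq]
  -- the mixed fourth moment
  have EBig : ∫ ω, (∑ t : Fin n, X (0, t) ω * X (1, t) ω) ^ 2
      * (∑ t : Fin n, X (0, t) ω * X (2, t) ω) ^ 2 ∂μ
      = (n : ℝ) * (M 4 - 1) + (n : ℝ) * (n : ℝ) := by
    have hsq : (fun ω => (∑ t : Fin n, X (0, t) ω * X (1, t) ω) ^ 2
        * (∑ t : Fin n, X (0, t) ω * X (2, t) ω) ^ 2)
        = fun ω => ∑ s : Fin n, ∑ u : Fin n, ∑ t : Fin n, ∑ v : Fin n,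
            (X (0, s) ω * X (1, s) ω) * (X (0, t) ω * X (1, t) ω)
              * ((X (0, u) ω * X (2, u) ω) * (X (0, v) ω * X (2, v) ω)) := by
      funext ω
      rw [sq, sq, Finset.sum_mul_sum, Finset.sum_mul_sum, Finset.sum_mul_sum]
      simp only [Finset.sum_mul_sum]
    rw [hsq]
    rw [integral_finset_sum _ (fun s _ => integrable_finset_sum _ fun u _ =>
      integrable_finset_sum _ fun t _ => integrable_finset_sum _ fun v _ => (quad s t u v).1)]
    rw [Finset.sum_congr rfl fun s _ => integral_finset_sum _ (fun u _ =>
      integrable_finset_sum _ fun t _ => integrable_finset_sum _ fun v _ => (quad s t u v).1)]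
    rw [Finset.sum_congr rfl fun s _ => Finset.sum_congr rfl fun u _ =>
      integral_finset_sum _ (fun t _ =>
        integrable_finset_sum _ fun v _ => (quad s t u v).1)]
    rw [Finset.sum_congr rfl fun s _ => Finset.sum_congr rfl fun u _ =>
      Finset.sum_congr rfl fun t _ => integral_finset_sum _ (fun v _ => (quad s t u v).1)]
    rw [Finset.sum_congr rfl fun s _ => Finset.sum_congr rfl fun u _ =>
      Finset.sum_congr rfl fun t _ => Finset.sum_congr rfl fun v _ => (quad s t u v).2]
    have collapse : ∀ s u : Fin n,
        (∑ t : Fin n, ∑ v : Fin n,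
          (if s = t ∧ u = v then (if s = u then M 4 else 1) else 0))
          = if s = u then M 4 else 1 := by
      intro s u
      simp [ite_and, Finset.sum_ite_eq, Finset.sum_ite_irrel]
    rw [Finset.sum_congr rfl fun s _ => Finset.sum_congr rfl fun u _ => collapse s u]
    have inner : ∀ s : Fin n, (∑ u : Fin n, (if s = u then M 4 else 1)) = (M 4 - 1) + n := by
      intro s
      rw [Finset.sum_congr rfl fun u _ =>
        (show (if s = u then M 4 else 1) = (if s = u then M 4 - 1 else 0) + 1 by
          split_ifs <;> ring), Finset.sum_add_distrib]
      simp [Finset.sum_ite_eq]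
    rw [Finset.sum_congr rfl fun s _ => inner s]
    simp [Finset.sum_const, Finset.card_univ]
  rw [EBig, E12, E13]
  have hM4 : M 4 = ∫ ω, X₀ ω ^ 4 ∂μ := rfl
  rw [← hM4]
  ring
end

section
/- Let X, (X_{it})_{1≤i≤p, 1≤t≤n} be iid real random variables with E[X] = 0, E[X²] = 1, E[X⁴] < ∞, and let S = (S_{ij}) = n^{−1} Σ_{t=1}^n x_t x_tᵀ be the sample covariance matrix of the columns x_t = (X_{1t},…,X_{pt})ᵀ. Then E[tr(S²)] = (p/n)(n + E[X⁴] − 2) + p²/n. -/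
open MeasureTheory ProbabilityTheory
open scoped ENNReal NNReal

private lemma sum_ite_eq_fin (m : ℕ) (A B : ℝ) :
    ∑ t : Fin m, ∑ s : Fin m, (if t = s then A else B) =
      (m : ℝ) * A + ((m : ℝ) ^ 2 - m) * B := by
  have h : ∀ t : Fin m, ∑ s : Fin m, (if t = s then A else B) = A + ((m : ℝ) - 1) * B := by
    intro t
    have : ∀ s : Fin m, (if t = s then A else B) = B + (if t = s then A - B else 0) := by
      intro s; split <;> ring
    rw [Finset.sum_congr rfl fun s _ => this s, Finset.sum_add_distrib, Finset.sum_const,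
      Finset.sum_ite_eq Finset.univ t (fun _ => A - B)]
    simp [Finset.card_univ]
    ring
  rw [Finset.sum_congr rfl fun t _ => h t, Finset.sum_const, Finset.card_univ]
  simp
  ring

theorem stmt_19 {Ω : Type*} [MeasurableSpace Ω] (μ : Measure Ω) [IsProbabilityMeasure μ]
    (p n : ℕ) (hp : 0 < p) (hn : 0 < n)
    (X : Fin p × Fin n → Ω → ℝ) (X₀ : Ω → ℝ)
    (hmeas : ∀ i, Measurable (X i)) (hmeas₀ : Measurable X₀)
    (hindep : iIndepFun X μ)
    (hid : ∀ i, IdentDistrib (X i) X₀ μ μ)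
    (hmean : ∫ ω, X₀ ω ∂μ = 0) (hvar : ∫ ω, X₀ ω ^ 2 ∂μ = 1)
    (hInt4 : Integrable (fun ω => X₀ ω ^ 4) μ)
    (S : Fin p → Fin p → Ω → ℝ)
    (hS : ∀ i j ω, S i j ω = (1 / (n : ℝ)) * ∑ t : Fin n, X (i, t) ω * X (j, t) ω) :
    ∫ ω, ∑ i : Fin p, ∑ j : Fin p, S i j ω ^ 2 ∂μ =
      ((p : ℝ) / n) * ((n : ℝ) + (∫ ω, X₀ ω ^ 4 ∂μ) - 2) + (p : ℝ) ^ 2 / n := by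
  set m4 : ℝ := ∫ ω, X₀ ω ^ 4 ∂μ with hm4
  have hn' : (n : ℝ) ≠ 0 := Nat.cast_ne_zero.mpr hn.ne'
  -- X₀ is in L⁴
  have h4 : MemLp X₀ 4 μ := by
    have h1 : MemLp (fun ω => ‖X₀ ω‖ ^ ((4 : ℝ≥0∞)).toReal) ((4 : ℝ≥0∞) / 4) μ := by
      have e : (fun ω => ‖X₀ ω‖ ^ ((4 : ℝ≥0∞)).toReal) = fun ω => X₀ ω ^ 4 := by
        ext ω
        rw [ENNReal.toReal_ofNat, Real.norm_eq_abs,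
          show ((4:ℝ)) = ((4:ℕ):ℝ) by norm_num, Real.rpow_natCast, pow_abs,
          abs_of_nonneg (by positivity)]
      rw [e, show (4 : ℝ≥0∞) / 4 = 1 by
        rw [ENNReal.div_self] <;> norm_num, memLp_one_iff_integrable]
      exact hInt4
    exact (memLp_norm_rpow_iff hmeas₀.aestronglyMeasurable (by norm_num) (by norm_num)).1 h1
  have hX4 : ∀ a, MemLp (X a) 4 μ := fun a => (hid a).symm.memLp_snd h4
  -- products of four of them are integrable
  have hmul2 : ∀ a b, MemLp (fun ω => X a ω * X b ω) 2 μ := by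
    intro a b
    have := (hX4 b).smul (hX4 a) (p := 4) (q := 4) (r := 2)
      (hpqr := ⟨by
        rw [← two_mul, show (4:ℝ≥0∞) = 2*2 by norm_num, ENNReal.mul_inv (by simp) (by simp),
          ← mul_assoc, ENNReal.mul_inv_cancel (by simp) (by simp), one_mul]⟩)
    exact this
  have hint4 : ∀ a b c d, Integrable (fun ω => X a ω * X b ω * (X c ω * X d ω)) μ := by
    intro a b c d
    have := (hmul2 c d).smul (hmul2 a b) (p := 2) (q := 2) (r := 1)
      (hpqr := ⟨by rw [ENNReal.inv_two_add_inv_two, inv_one]⟩)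
    rw [← memLp_one_iff_integrable]
    exact this
  -- moments
  have hmean_a : ∀ a, ∫ ω, X a ω ∂μ = 0 := fun a => ((hid a).integral_eq).trans hmean
  have hsq_a : ∀ a, ∫ ω, X a ω ^ 2 ∂μ = 1 := fun a =>
    (((hid a).comp (measurable_id.pow_const 2)).integral_eq).trans hvar
  have h4_a : ∀ a, ∫ ω, X a ω ^ 4 ∂μ = m4 := fun a =>
    ((hid a).comp (measurable_id.pow_const 4)).integral_eq
  -- cross moments at a fixed time
  have hcross : ∀ (i j : Fin p) (t : Fin n),
      ∫ ω, X (i, t) ω * X (j, t) ω ∂μ = if i = j then 1 else 0 := by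
    intro i j t
    by_cases hij : i = j
    · subst hij
      simp only [if_pos rfl]
      calc ∫ ω, X (i, t) ω * X (i, t) ω ∂μ = ∫ ω, X (i, t) ω ^ 2 ∂μ := by
            congr 1; ext ω; ring
        _ = 1 := hsq_a _
    · have hne : (i, t) ≠ (j, t) := fun h => hij (congrArg Prod.fst h)
      have hI : IndepFun (X (i, t)) (X (j, t)) μ := hindep.indepFun hne
      rw [if_neg hij]
      have h2 : ∫ ω, X (i, t) ω * X (j, t) ω ∂μ =
          (∫ ω, X (i, t) ω ∂μ) * ∫ ω, X (j, t) ω ∂μ :=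
        hI.integral_mul_eq_mul_integral (hmeas _).aestronglyMeasurable (hmeas _).aestronglyMeasurable
      rw [h2, hmean_a, hmean_a, mul_zero]
  -- the squared cross moment
  have hsqsq : ∀ (a b : Fin p × Fin n), a ≠ b →
      ∫ ω, X a ω ^ 2 * X b ω ^ 2 ∂μ = 1 := by
    intro a b hne
    have hI : IndepFun (fun ω => X a ω ^ 2) (fun ω => X b ω ^ 2) μ :=
      (hindep.indepFun hne).comp (measurable_id.pow_const 2) (measurable_id.pow_const 2)
    have h2 : ∫ ω, X a ω ^ 2 * X b ω ^ 2 ∂μ =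
        (∫ ω, X a ω ^ 2 ∂μ) * ∫ ω, X b ω ^ 2 ∂μ :=
      hI.integral_mul_eq_mul_integral ((hmeas a).pow_const 2).aestronglyMeasurable
        ((hmeas b).pow_const 2).aestronglyMeasurable
    rw [h2, hsq_a, hsq_a, mul_one]
  -- the value of each quadruple integral
  have key : ∀ (i j : Fin p) (t s : Fin n),
      ∫ ω, X (i, t) ω * X (j, t) ω * (X (i, s) ω * X (j, s) ω) ∂μ =
        if t = s then (if i = j then m4 else 1) else (if i = j then 1 else 0) := by
    intro i j t s
    by_cases hts : t = s
    · subst hts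
      rw [if_pos rfl]
      by_cases hij : i = j
      · subst hij
        rw [if_pos rfl]
        calc ∫ ω, X (i, t) ω * X (i, t) ω * (X (i, t) ω * X (i, t) ω) ∂μ
            = ∫ ω, X (i, t) ω ^ 4 ∂μ := by congr 1; ext ω; ring
          _ = m4 := h4_a _
      · rw [if_neg hij]
        calc ∫ ω, X (i, t) ω * X (j, t) ω * (X (i, t) ω * X (j, t) ω) ∂μ
            = ∫ ω, X (i, t) ω ^ 2 * X (j, t) ω ^ 2 ∂μ := by congr 1; ext ω; ring
          _ = 1 := hsqsq _ _ (fun h => hij (congrArg Prod.fst h))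
    · rw [if_neg hts]
      have h1 : (i, t) ≠ (i, s) := fun h => hts (congrArg Prod.snd h)
      have h2 : (i, t) ≠ (j, s) := fun h => hts (congrArg Prod.snd h)
      have h3 : (j, t) ≠ (i, s) := fun h => hts (congrArg Prod.snd h)
      have h4' : (j, t) ≠ (j, s) := fun h => hts (congrArg Prod.snd h)
      have hI : IndepFun (X (i, t) * X (j, t)) (X (i, s) * X (j, s)) μ :=
        hindep.indepFun_mul_mul hmeas (i, t) (j, t) (i, s) (j, s) h1 h2 h3 h4'
      have h2 : ∫ ω, X (i, t) ω * X (j, t) ω * (X (i, s) ω * X (j, s) ω) ∂μ =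
          (∫ ω, X (i, t) ω * X (j, t) ω ∂μ) * ∫ ω, X (i, s) ω * X (j, s) ω ∂μ :=
        hI.integral_mul_eq_mul_integral ((hmeas _).mul (hmeas _)).aestronglyMeasurable
          ((hmeas _).mul (hmeas _)).aestronglyMeasurable
      rw [h2, hcross, hcross]
      by_cases hij : i = j
      · simp [hij]
      · simp [hij]
  -- expand the sum of squares pointwise
  have expand : ∀ ω, ∑ i : Fin p, ∑ j : Fin p, S i j ω ^ 2 =
      (1 / (n : ℝ)) ^ 2 * ∑ i : Fin p, ∑ j : Fin p, ∑ t : Fin n, ∑ s : Fin n,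
        X (i, t) ω * X (j, t) ω * (X (i, s) ω * X (j, s) ω) := by
    intro ω
    rw [Finset.mul_sum]
    refine Finset.sum_congr rfl fun i _ => ?_
    rw [Finset.mul_sum]
    refine Finset.sum_congr rfl fun j _ => ?_
    rw [hS, mul_pow, pow_two (∑ t : Fin n, X (i, t) ω * X (j, t) ω), Finset.sum_mul_sum]
  -- compute the integral
  rw [integral_congr_ae (Filter.Eventually.of_forall expand), integral_const_mul]
  have hswap : (∫ ω, ∑ i : Fin p, ∑ j : Fin p, ∑ t : Fin n, ∑ s : Fin n,
      X (i, t) ω * X (j, t) ω * (X (i, s) ω * X (j, s) ω) ∂μ) =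
      ∑ i : Fin p, ∑ j : Fin p, ∑ t : Fin n, ∑ s : Fin n,
        ∫ ω, X (i, t) ω * X (j, t) ω * (X (i, s) ω * X (j, s) ω) ∂μ := by
    rw [integral_finset_sum _ fun i _ => (integrable_finset_sum _ fun j _ =>
      integrable_finset_sum _ fun t _ => integrable_finset_sum _ fun s _ => hint4 _ _ _ _)]
    refine Finset.sum_congr rfl fun i _ => ?_
    rw [integral_finset_sum _ fun j _ => (integrable_finset_sum _ fun t _ =>
      integrable_finset_sum _ fun s _ => hint4 _ _ _ _)]
    refine Finset.sum_congr rfl fun j _ => ?_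
    rw [integral_finset_sum _ fun t _ => integrable_finset_sum _ fun s _ => hint4 _ _ _ _]
    refine Finset.sum_congr rfl fun t _ => ?_
    exact integral_finset_sum _ fun s _ => hint4 _ _ _ _
  rw [hswap]
  have hval : ∑ i : Fin p, ∑ j : Fin p, ∑ t : Fin n, ∑ s : Fin n,
      ∫ ω, X (i, t) ω * X (j, t) ω * (X (i, s) ω * X (j, s) ω) ∂μ =
      (p : ℝ) * ((n : ℝ) * m4 + ((n : ℝ) ^ 2 - n) * 1) +
        ((p : ℝ) ^ 2 - p) * ((n : ℝ) * 1 + ((n : ℝ) ^ 2 - n) * 0) := by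
    have inner : ∀ i j : Fin p, ∑ t : Fin n, ∑ s : Fin n,
        ∫ ω, X (i, t) ω * X (j, t) ω * (X (i, s) ω * X (j, s) ω) ∂μ =
        if i = j then (n : ℝ) * m4 + ((n : ℝ) ^ 2 - n) * 1
        else (n : ℝ) * 1 + ((n : ℝ) ^ 2 - n) * 0 := by
      intro i j
      by_cases hij : i = j
      · rw [if_pos hij]
        rw [Finset.sum_congr rfl fun t _ => Finset.sum_congr rfl fun s _ => key i j t s]
        simp only [if_pos hij]
        exact sum_ite_eq_fin n m4 1
      · rw [if_neg hij]
        rw [Finset.sum_congr rfl fun t _ => Finset.sum_congr rfl fun s _ => key i j t s]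
        simp only [if_neg hij]
        exact sum_ite_eq_fin n 1 0
    rw [Finset.sum_congr rfl fun i _ => Finset.sum_congr rfl fun j _ => inner i j]
    rw [sum_ite_eq_fin p _ _]
  rw [hval]
  field_simp
  ring
end
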